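/- arXiv:1811.08894 — 3 statements merged into one kernel-verified Lean document; each statement's English description precedes it below -/
import Mathlib

section
/- Let n ≥ 1, N = 2^n, r = 2^s with 0 ≤ s ≤ n−1, and let the shift satisfy N/2 ≤ l < N/2 + 2^s. Then the periodic state Ψ^n_{l,r} is separable and equals |1⟩ ⊗ |+⟩^{⊗(n−s−1)} ⊗ |l − N/2⟩^{[s]}: explicitly, Ψ^n_{l,r} x = 1/√(2^{n−s−1}) if x ≥ N/2 and x ≡ l (mod 2^s), and 0 otherwise, and this amplitude function factorizes as a product over the n qubits. -/
open scoped BigOperators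

noncomputable section

/-- `bit n i x` is the i-th binary digit of `x`, counted from the most significant. -/
def bit (n : ℕ) (i : Fin n) (x : Fin (2^n)) : Fin 2 :=
  ⟨((x : ℕ) / 2^(n - 1 - (i : ℕ))) % 2, Nat.mod_lt _ (by norm_num)⟩

/-- An n-qubit state is separable if its amplitudes factor as a product over the qubits. -/
def Separable (n : ℕ) (ψ : Fin (2^n) → ℂ) : Prop :=
  ∃ v : Fin n → Fin 2 → ℂ, ∀ x, ψ x = ∏ i, v i (bit n i x)

/-- The periodic state with shift `l` and period `r`:
amplitude `1/√A` at `x = l + i·r` for `0 ≤ i < A`, with `A = ⌈(2^n - l)/r⌉`. -/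
def periodicState (n l r : ℕ) : Fin (2^n) → ℂ := fun x =>
  if ∃ i < (2^n - l + r - 1) / r, (x : ℕ) = l + i * r
  then (1 : ℂ) / Real.sqrt (((2^n - l + r - 1) / r : ℕ)) else 0

/-- Quantum Fourier transform of an n-qubit state. -/
def QFT (n : ℕ) (ψ : Fin (2^n) → ℂ) : Fin (2^n) → ℂ := fun y =>
  (1 / (Real.sqrt (2^n) : ℝ) : ℂ) * ∑ x : Fin (2^n),
    Complex.exp (2 * Real.pi * Complex.I * (x : ℕ) * (y : ℕ) / ((2^n : ℕ) : ℂ)) * ψ x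

/-- The generalized GHZ state. -/
def GHZ (n : ℕ) : Fin (2^n) → ℂ := fun x =>
  if (x : ℕ) = 0 ∨ (x : ℕ) = 2^n - 1 then (1 : ℂ) / Real.sqrt 2 else 0

/-- SLOCC equivalence of two n-qubit states. -/
def SLOCCEquiv (n : ℕ) (ψ φ : Fin (2^n) → ℂ) : Prop :=
  ∃ (g : Fin n → Matrix (Fin 2) (Fin 2) ℂ) (c : ℂ),
    c ≠ 0 ∧ (∀ i, IsUnit (g i)) ∧
    ∀ x, φ x = c * ∑ y : Fin (2^n), (∏ i, g i (bit n i x) (bit n i y)) * ψ y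

/- Auxiliary lemmas -/

lemma stmt5_mod_two_pow_eq_iff (x y s : ℕ) :
    x % 2^s = y % 2^s ↔ ∀ j < s, x / 2^j % 2 = y / 2^j % 2 := by
  constructor
  · intro h j hj
    have hx := congrArg (fun z => Nat.testBit z j) h
    simp only [Nat.testBit_mod_two_pow, hj, decide_true, Bool.true_and] at hx
    rw [Nat.testBit_eq_decide_div_mod_eq, Nat.testBit_eq_decide_div_mod_eq] at hx
    simp only [decide_eq_decide] at hx
    have h1 : x / 2^j % 2 < 2 := Nat.mod_lt _ (by norm_num)
    have h2 : y / 2^j % 2 < 2 := Nat.mod_lt _ (by norm_num)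
    omega
  · intro h
    apply Nat.eq_of_testBit_eq
    intro j
    rw [Nat.testBit_mod_two_pow, Nat.testBit_mod_two_pow]
    by_cases hj : j < s
    · simp only [hj, decide_true, Bool.true_and]
      rw [Nat.testBit_eq_decide_div_mod_eq, Nat.testBit_eq_decide_div_mod_eq, h j hj]
    · simp [hj]

lemma stmt5_mem_iff_abs (H R C l x : ℕ) (hH : H = R * C)
    (hl1 : H ≤ l) (hl2 : l < H + R) (hx : x < 2*H) :
    (∃ i < C, x = l + i * R) ↔ (H ≤ x ∧ x % R = l % R) := by
  have hlmod : l % R = l - H := by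
    have h : l = R * C + (l - H) := by omega
    conv_lhs => rw [h]
    rw [Nat.mul_add_mod]
    apply Nat.mod_eq_of_lt; omega
  constructor
  · rintro ⟨i, hi, rfl⟩
    refine ⟨le_trans hl1 (Nat.le_add_right _ _), ?_⟩
    rw [Nat.add_mul_mod_self_right]
  · rintro ⟨hx1, hx2⟩
    have hlx : l ≤ x := by
      by_contra hlt
      push_neg at hlt
      have hxrep : x = R * C + (x - H) := by omega
      have : x % R = x - H := by
        conv_lhs => rw [hxrep]
        rw [Nat.mul_add_mod]
        apply Nat.mod_eq_of_lt; omega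
      omega
    have hdvd : R ∣ x - l := by
      rw [← Nat.modEq_iff_dvd' hlx]
      exact hx2.symm
    obtain ⟨i, hi⟩ := hdvd
    refine ⟨i, ?_, by rw [mul_comm]; omega⟩
    by_contra hbig
    push_neg at hbig
    have : R * C ≤ R * i := Nat.mul_le_mul_left _ hbig
    omega

lemma stmt5_sqrt_two_pow (k : ℕ) : Real.sqrt (2^k) = (Real.sqrt 2)^k := by
  induction k with
  | zero => simp
  | succ k ih => rw [pow_succ, pow_succ, ← ih, ← Real.sqrt_mul (by positivity)]

/-- for `r = 2^s` with `s ≤ n−1` and `N/2 ≤ l < N/2 + 2^s`, the periodic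
state equals `|1⟩ ⊗ |+⟩^{⊗(n−s−1)} ⊗ |l−N/2⟩^{[s]}` and is separable. -/
theorem stmt_5 (n s l : ℕ) (hn : 1 ≤ n) (hs : s ≤ n - 1)
    (hl1 : 2^(n-1) ≤ l) (hl2 : l < 2^(n-1) + 2^s) :
    (∀ x : Fin (2^n), periodicState n l (2^s) x =
      if 2^(n-1) ≤ (x : ℕ) ∧ (x : ℕ) % 2^s = l % 2^s
      then (1 : ℂ) / Real.sqrt (2^(n-s-1)) else 0) ∧
    Separable n (periodicState n l (2^s)) := by
  classical
  have h2n : (2:ℕ)^n = 2 * 2^(n-1) := by rw [← pow_succ']; congr 1; omega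
  have hH : (2:ℕ)^(n-1) = 2^s * 2^(n-s-1) := by rw [← pow_add]; congr 1; omega
  have hRpos : 0 < (2:ℕ)^s := Nat.pow_pos (by norm_num)
  have hRH : (2:ℕ)^s ≤ 2^(n-1) := Nat.pow_le_pow_right (by norm_num) hs
  have hA : (2^n - l + 2^s - 1) / 2^s = 2^(n-s-1) := by
    have hnum : 2^n - l + 2^s - 1 = (2^s - 1 - (l - 2^(n-1))) + 2^(n-1) := by omega
    rw [hnum, hH, mul_comm ((2:ℕ)^s) _, Nat.add_mul_div_right _ _ hRpos,
      Nat.div_eq_of_lt (by omega), Nat.zero_add]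
  have hbit0 : ∀ x : Fin (2^n), ((x:ℕ)/2^(n-1) % 2 = 1 ↔ 2^(n-1) ≤ (x:ℕ)) := by
    intro x
    have hx : (x:ℕ) < 2^n := x.isLt
    have hd : (x:ℕ)/2^(n-1) < 2 := Nat.div_lt_of_lt_mul (by omega)
    rw [Nat.mod_eq_of_lt hd]
    constructor
    · intro h
      exact (Nat.one_le_div_iff (by omega)).mp (by omega)
    · intro h
      have := (Nat.one_le_div_iff (show 0 < 2^(n-1) by omega)).mpr h
      omega
  have part1 : ∀ x : Fin (2^n), periodicState n l (2^s) x =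
      if 2^(n-1) ≤ (x : ℕ) ∧ (x : ℕ) % 2^s = l % 2^s
      then (1 : ℂ) / Real.sqrt (2^(n-s-1)) else 0 := by
    intro x
    have hx : (x:ℕ) < 2^n := x.isLt
    have hiff := stmt5_mem_iff_abs (2^(n-1)) (2^s) (2^(n-s-1)) l (x:ℕ) hH hl1 hl2 (by omega)
    simp only [periodicState, hA]
    by_cases hcond : 2^(n-1) ≤ (x:ℕ) ∧ (x:ℕ) % 2^s = l % 2^s
    · rw [if_pos (hiff.mpr hcond), if_pos hcond]
      push_cast
      ring
    · rw [if_neg (fun h => hcond (hiff.mp h)), if_neg hcond]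
  refine ⟨part1, ?_⟩
  set c : ℂ := ((1/Real.sqrt 2 : ℝ) : ℂ) with hc
  refine ⟨fun i b => if (i:ℕ) = 0 then (if (b:ℕ) = 1 then 1 else 0)
    else if (i:ℕ) < n - s then c
    else if (b:ℕ) = l / 2^(n-1-(i:ℕ)) % 2 then 1 else 0, ?_⟩
  intro x
  rw [part1 x]
  have hx : (x:ℕ) < 2^n := x.isLt
  set g : ℕ → ℂ := fun i => if i = 0 then (if (x:ℕ)/2^(n-1) % 2 = 1 then (1:ℂ) else 0)
    else if i < n - s then c
    else if (x:ℕ)/2^(n-1-i) % 2 = l/2^(n-1-i) % 2 then 1 else 0 with hg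
  have hprod : ∀ i : Fin n,
      (if (i:ℕ) = 0 then (if ((bit n i x):ℕ) = 1 then (1:ℂ) else 0)
        else if (i:ℕ) < n - s then c
        else if ((bit n i x):ℕ) = l / 2^(n-1-(i:ℕ)) % 2 then 1 else 0) = g (i:ℕ) := by
    intro i
    by_cases h0 : (i:ℕ) = 0
    · simp [bit, hg, h0]
    · simp [bit, hg, h0]
      rfl
  rw [Finset.prod_congr rfl (fun i _ => hprod i), Fin.prod_univ_eq_prod_range g n]
  by_cases h1 : 2^(n-1) ≤ (x:ℕ)
  · by_cases h2 : (x:ℕ) % 2^s = l % 2^s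
    · rw [if_pos ⟨h1, h2⟩]
      symm
      rw [Finset.range_eq_Ico,
        ← Finset.prod_Ico_consecutive g (Nat.zero_le (n-s)) (by omega : n-s ≤ n),
        ← Finset.prod_Ico_consecutive g (Nat.zero_le 1) (by omega : 1 ≤ n-s)]
      have e0 : ∏ i ∈ Finset.Ico 0 1, g i = 1 := by
        rw [show Finset.Ico 0 1 = {0} from rfl, Finset.prod_singleton]
        simp [hg, hbit0 x, h1]
      have e1 : ∏ i ∈ Finset.Ico 1 (n-s), g i = c ^ (n-s-1) := by
        have hcongr : ∀ i ∈ Finset.Ico 1 (n-s), g i = c := by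
          intro i hi
          rw [Finset.mem_Ico] at hi
          simp only [hg]
          rw [if_neg (by omega), if_pos hi.2]
        rw [Finset.prod_congr rfl hcongr, Finset.prod_const, Nat.card_Ico]
      have e2 : ∏ i ∈ Finset.Ico (n-s) n, g i = 1 := by
        apply Finset.prod_eq_one
        intro i hi
        rw [Finset.mem_Ico] at hi
        have hjs : n-1-i < s := by omega
        simp only [hg]
        rw [if_neg (by omega), if_neg (by omega),
          if_pos ((stmt5_mod_two_pow_eq_iff (x:ℕ) l s).mp h2 _ hjs)]
      rw [e0, e1, e2, one_mul, mul_one]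
      have hcast : c^(n-s-1) = (((1/Real.sqrt (2^(n-s-1)) : ℝ)) : ℂ) := by
        rw [hc, ← Complex.ofReal_pow]
        congr 1
        rw [div_pow, one_pow, stmt5_sqrt_two_pow]
      rw [hcast]
      push_cast
      ring
    · rw [if_neg (by tauto)]
      symm
      rw [stmt5_mod_two_pow_eq_iff] at h2
      push_neg at h2
      obtain ⟨j, hjs, hne⟩ := h2
      apply Finset.prod_eq_zero (Finset.mem_range.mpr (show n-1-j < n by omega))
      have hjj : n-1-(n-1-j) = j := by omega
      simp only [hg]
      rw [if_neg (by omega), if_neg (by omega), hjj, if_neg hne]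
  · rw [if_neg (by tauto)]
    symm
    apply Finset.prod_eq_zero (Finset.mem_range.mpr (show 0 < n by omega))
    simp [hg, hbit0 x, h1]
end
end

section
/- Let n ≥ 2 and N = 2^n. The periodic state Ψ^n_{N/2−1,1} (shift l = N/2 − 1, period r = 1), whose amplitude is 1/√(N/2+1) at every x with N/2 − 1 ≤ x < N and 0 elsewhere, satisfies Ψ^n_{N/2−1,1} = (1/√(N/2+1)) ( e_{N/2−1} + √(N/2) · |1⟩ ⊗ |+⟩^{⊗(n−1)} ) and is SLOCC-equivalent to GHZ_n. -/
open scoped BigOperators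

noncomputable section

/- ### auxiliary lemmas -/

lemma bit_val' (n : ℕ) (i : Fin n) (x : Fin (2^n)) :
    (bit n i x : ℕ) = (x : ℕ) / 2^(n - 1 - (i : ℕ)) % 2 := rfl

lemma fin2_cases (b : Fin 2) : b = 0 ∨ b = 1 := by
  rcases b with ⟨b, hb⟩
  interval_cases b
  · left; rfl
  · right; rfl

lemma bit_injective' (n : ℕ) :
    Function.Injective (fun x : Fin (2^n) => fun i => bit n i x) := by
  intro x y h
  apply Fin.ext
  apply Nat.eq_of_testBit_eq
  intro j
  rcases lt_or_ge j n with hj | hj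
  · have hi : n - 1 - (n - 1 - j) = j := by omega
    have := congrFun h ⟨n - 1 - j, by omega⟩
    rw [Fin.ext_iff, bit_val', bit_val'] at this
    simp only [hi] at this
    rw [Nat.testBit_eq_decide_div_mod_eq, Nat.testBit_eq_decide_div_mod_eq, this]
  · rw [Nat.testBit_lt_two_pow (lt_of_lt_of_le x.2 (Nat.pow_le_pow_right (by norm_num) hj)),
      Nat.testBit_lt_two_pow (lt_of_lt_of_le y.2 (Nat.pow_le_pow_right (by norm_num) hj))]

lemma sum_prod_bit (n : ℕ) (h : Fin n → Fin 2 → ℂ) :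
    ∑ y : Fin (2^n), ∏ i, h i (bit n i y) = ∏ i, (h i 0 + h i 1) := by
  have hbij : Function.Bijective (fun x : Fin (2^n) => fun i => bit n i x) := by
    rw [Fintype.bijective_iff_injective_and_card]
    exact ⟨bit_injective' n, by simp⟩
  rw [Fintype.sum_bijective _ hbij _ (fun v : Fin n → Fin 2 => ∏ i, h i (v i))
    (fun x => rfl)]
  rw [← Fintype.prod_sum h]
  congr 1
  ext i
  exact Fin.sum_univ_two (h i)

lemma periodic_val (n : ℕ) (hn : 2 ≤ n) (x : Fin (2^n)) :
    periodicState n (2^(n-1) - 1) 1 x =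
      if 2^(n-1) - 1 ≤ (x : ℕ) then ((1 : ℂ) / Real.sqrt (2^(n-1) + 1)) else 0 := by
  have h1 : 1 ≤ 2^(n-1) := Nat.one_le_two_pow
  have h2 : 2^n = 2 * 2^(n-1) := by rw [← pow_succ']; congr 1; omega
  have hA : (2^n - (2^(n-1) - 1) + 1 - 1) / 1 = 2^(n-1) + 1 := by
    rw [Nat.div_one]; omega
  have hx := x.2
  unfold periodicState
  rw [hA]
  have hcond : (∃ i < 2^(n-1) + 1, (x : ℕ) = 2^(n-1) - 1 + i * 1) ↔ 2^(n-1) - 1 ≤ (x : ℕ) := by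
    constructor
    · rintro ⟨i, hi, h⟩; omega
    · intro h; exact ⟨(x : ℕ) - (2^(n-1) - 1), by omega, by omega⟩
  rw [if_congr hcond rfl rfl]
  congr 2
  push_cast
  ring

/- bits of special states -/

lemma bit_of_val_zero (n : ℕ) (x : Fin (2^n)) (hx : (x : ℕ) = 0) (i : Fin n) :
    bit n i x = 0 := by
  apply Fin.ext
  rw [bit_val', hx]
  simp

lemma bit_of_val_top (n : ℕ) (x : Fin (2^n)) (hx : (x : ℕ) = 2^n - 1) (i : Fin n) :
    bit n i x = 1 := by
  apply Fin.ext
  rw [bit_val', hx]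
  have h := Nat.testBit_two_pow_sub_one n (n - 1 - (i : ℕ))
  rw [Nat.testBit_eq_decide_div_mod_eq] at h
  have hlt : n - 1 - (i : ℕ) < n := by have := i.2; omega
  simp only [decide_eq_decide] at h
  simpa [hlt] using h.2 hlt

lemma all_bits_zero_iff (n : ℕ) (x : Fin (2^n)) :
    (∀ i, bit n i x = 0) ↔ (x : ℕ) = 0 := by
  constructor
  · intro h
    have h0 : (0 : ℕ) < 2^n := Nat.two_pow_pos n
    have hxy : (fun i => bit n i x) = (fun i => bit n i (⟨0, h0⟩ : Fin (2^n))) :=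
      funext fun i => by rw [h i, bit_of_val_zero n ⟨0, h0⟩ rfl i]
    have := bit_injective' n hxy
    exact congrArg Fin.val this
  · intro h i; exact bit_of_val_zero n x h i

lemma all_bits_one_iff (n : ℕ) (x : Fin (2^n)) :
    (∀ i, bit n i x = 1) ↔ (x : ℕ) = 2^n - 1 := by
  constructor
  · intro h
    have h0 : 2^n - 1 < 2^n := by
      have : (0:ℕ) < 2^n := Nat.two_pow_pos n; omega
    have hxy : (fun i => bit n i x) = (fun i => bit n i (⟨2^n - 1, h0⟩ : Fin (2^n))) :=
      funext fun i => by rw [h i, bit_of_val_top n ⟨2^n - 1, h0⟩ rfl i]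
    have := bit_injective' n hxy
    exact congrArg Fin.val this
  · intro h i; exact bit_of_val_top n x h i

lemma bit_zero_eq_one_iff (n : ℕ) (hn : 1 ≤ n) (z : Fin n) (hz : (z : ℕ) = 0)
    (x : Fin (2^n)) :
    bit n z x = 1 ↔ 2^(n-1) ≤ (x : ℕ) := by
  have h2 : 2^n = 2 * 2^(n-1) := by rw [← pow_succ']; congr 1; omega
  have hx := x.2
  have hd : (x : ℕ) / 2^(n-1) < 2 := Nat.div_lt_of_lt_mul (by omega)
  rw [Fin.ext_iff, bit_val', hz]
  simp only [Fin.val_one, Nat.sub_zero]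
  constructor
  · intro h
    by_contra hle
    push_neg at hle
    rw [Nat.div_eq_of_lt hle] at h
    simp at h
  · intro h
    have h1 : 1 ≤ (x:ℕ) / 2^(n-1) := (Nat.one_le_div_iff (Nat.two_pow_pos _)).2 h
    have : (x:ℕ) / 2^(n-1) = 1 := by omega
    rw [this]

lemma bit_zero_eq_zero_lfin (n : ℕ) (hn : 2 ≤ n) (hl : 2^(n-1) - 1 < 2^n)
    (z : Fin n) (hz : (z : ℕ) = 0) :
    bit n z (⟨2^(n-1) - 1, hl⟩ : Fin (2^n)) = 0 := by
  apply Fin.ext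
  rw [bit_val', hz]
  simp only [Fin.val_zero, Nat.sub_zero]
  have h1 : 1 ≤ 2^(n-1) := Nat.one_le_two_pow
  rw [Nat.div_eq_of_lt (by omega)]

lemma bit_lfin_eq_one (n : ℕ) (hn : 2 ≤ n) (hl : 2^(n-1) - 1 < 2^n) (i : Fin n)
    (hi : (i : ℕ) ≠ 0) :
    bit n i (⟨2^(n-1) - 1, hl⟩ : Fin (2^n)) = 1 := by
  apply Fin.ext
  rw [bit_val']
  have hiv : 1 ≤ (i : ℕ) := by omega
  have hlt : n - 1 - (i : ℕ) < n - 1 := by have := i.2; omega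
  have h := Nat.testBit_two_pow_sub_one (n-1) (n - 1 - (i : ℕ))
  rw [Nat.testBit_eq_decide_div_mod_eq] at h
  simp only [decide_eq_decide] at h
  simpa using h.2 hlt

/-- `Ψ^n_{N/2−1,1} = (1/√(N/2+1)) (e_{N/2−1} + √(N/2) · |1⟩⊗|+⟩^{⊗(n−1)})`
and it is SLOCC-equivalent to `GHZ_n`. -/
theorem stmt_7 (n : ℕ) (hn : 2 ≤ n) :
    (∀ x : Fin (2^n), periodicState n (2^(n-1) - 1) 1 x =
      ((1 / Real.sqrt (2^(n-1) + 1) : ℝ) : ℂ) *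
        ((if (x : ℕ) = 2^(n-1) - 1 then (1 : ℂ) else 0) +
          ((Real.sqrt (2^(n-1)) : ℝ) : ℂ) *
            (if 2^(n-1) ≤ (x : ℕ) then ((1 / Real.sqrt (2^(n-1)) : ℝ) : ℂ) else 0))) ∧
    SLOCCEquiv n (periodicState n (2^(n-1) - 1) 1) (GHZ n) := by
  have h1 : 1 ≤ 2^(n-1) := Nat.one_le_two_pow
  have h2 : 2^n = 2 * 2^(n-1) := by rw [← pow_succ']; congr 1; omega
  have hP : (0:ℝ) < 2^(n-1) := by positivity
  have hsP : Real.sqrt (2^(n-1)) ≠ 0 := by positivity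
  have hsA : Real.sqrt ((2:ℝ)^(n-1) + 1) ≠ 0 := by positivity
  constructor
  · -- part 1
    intro x
    rw [periodic_val n hn x]
    by_cases hx1 : (x : ℕ) = 2^(n-1) - 1
    · have hx2 : ¬ (2^(n-1) ≤ (x : ℕ)) := by omega
      rw [if_pos (by omega), if_pos hx1, if_neg hx2]
      push_cast
      ring
    · by_cases hx2 : 2^(n-1) ≤ (x : ℕ)
      · rw [if_pos (by omega), if_neg hx1, if_pos hx2]
        have hone : (Real.sqrt ((2:ℝ)^(n-1)) : ℂ) * ((1 / Real.sqrt ((2:ℝ)^(n-1)) : ℝ) : ℂ) = 1 := by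
          push_cast
          field_simp
        push_cast
        rw [zero_add]
        push_cast at hone
        rw [hone]
        ring
      · rw [if_neg (by omega), if_neg hx1, if_neg hx2]
        ring
  · -- part 2
    set M : Matrix (Fin 2) (Fin 2) ℂ := !![(-1:ℂ), 1; 1, 0] with hM
    have hMe : ∀ b : Fin 2, M b 1 = if b = 0 then (1:ℂ) else 0 := by
      intro b
      rcases fin2_cases b with hb | hb <;> subst hb <;> simp [hM]
    have hMsum : ∀ b : Fin 2, M b 0 + M b 1 = if b = 1 then (1:ℂ) else 0 := by
      intro b
      rcases fin2_cases b with hb | hb <;> subst hb <;> simp [hM]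
    have hz : (0:ℕ) < n := by omega
    set z : Fin n := ⟨0, hz⟩ with hzdef
    set g : Fin n → Matrix (Fin 2) (Fin 2) ℂ := fun i => if i = z then 1 else M with hg
    have hgz : g z = 1 := by rw [hg]; simp
    have hgi : ∀ i : Fin n, i ≠ z → g i = M := by
      intro i hi; rw [hg]; simp [hi]
    refine ⟨g, ((Real.sqrt (2^(n-1) + 1) : ℝ) : ℂ) / ((Real.sqrt 2 : ℝ) : ℂ), ?_, ?_, ?_⟩
    · apply div_ne_zero
      · exact_mod_cast hsA
      · simp only [ne_eq, Complex.ofReal_eq_zero]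
        positivity
    · intro i
      by_cases hi : i = z
      · rw [hi, hgz]; exact isUnit_one
      · rw [hgi i hi]
        rw [Matrix.isUnit_iff_isUnit_det]
        have : M.det = -1 := by
          rw [hM, Matrix.det_fin_two_of]; ring
        rw [this]
        exact isUnit_one.neg
    · intro x
      have hl : 2^(n-1) - 1 < 2^n := by omega
      set lfin : Fin (2^n) := ⟨2^(n-1) - 1, hl⟩ with hlfin
      have hψ : ∀ y : Fin (2^n), periodicState n (2^(n-1) - 1) 1 y =
          ((1:ℂ) / Real.sqrt (2^(n-1) + 1)) *
            ((if y = lfin then (1:ℂ) else 0) + (if bit n z y = 1 then (1:ℂ) else 0)) := by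
        intro y
        rw [periodic_val n hn y]
        rw [show (if y = lfin then (1:ℂ) else 0) = (if (y:ℕ) = 2^(n-1) - 1 then (1:ℂ) else 0) by
          simp [Fin.ext_iff, hlfin]]
        rw [show (if bit n z y = 1 then (1:ℂ) else 0) = (if 2^(n-1) ≤ (y:ℕ) then (1:ℂ) else 0) by
          simp only [bit_zero_eq_one_iff n (by omega) z rfl y]]
        by_cases hy1 : (y : ℕ) = 2^(n-1) - 1
        · have hy2 : ¬ (2^(n-1) ≤ (y:ℕ)) := by omega
          rw [if_pos (by omega), if_pos hy1, if_neg hy2]; ring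
        · by_cases hy2 : 2^(n-1) ≤ (y:ℕ)
          · rw [if_pos (by omega), if_neg hy1, if_pos hy2]; ring
          · rw [if_neg (by omega), if_neg hy1, if_neg hy2]; ring
      set T : Fin (2^n) → ℂ := fun y => ∏ i, g i (bit n i x) (bit n i y) with hT
      have hsplit : ∑ y : Fin (2^n), T y * periodicState n (2^(n-1) - 1) 1 y =
          ((1:ℂ) / Real.sqrt (2^(n-1) + 1)) *
            ((∑ y : Fin (2^n), T y * (if y = lfin then (1:ℂ) else 0)) +
             (∑ y : Fin (2^n), T y * (if bit n z y = 1 then (1:ℂ) else 0))) := by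
        rw [mul_add, Finset.mul_sum, Finset.mul_sum, ← Finset.sum_add_distrib]
        apply Finset.sum_congr rfl
        intro y _
        rw [hψ y]
        ring
      have hS1 : (∑ y : Fin (2^n), T y * (if y = lfin then (1:ℂ) else 0)) =
          if (x : ℕ) = 0 then (1:ℂ) else 0 := by
        simp only [mul_ite, mul_one, mul_zero]
        rw [Finset.sum_ite_eq' Finset.univ lfin T, if_pos (Finset.mem_univ _)]
        have hTl : T lfin = ∏ i, (if bit n i x = 0 then (1:ℂ) else 0) := by
          rw [hT]
          apply Finset.prod_congr rfl
          intro i _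
          by_cases hi : i = z
          · rw [hi, hgz, bit_zero_eq_zero_lfin n hn hl z rfl, Matrix.one_apply]
          · have hiv : (i : ℕ) ≠ 0 := by
              intro h; exact hi (Fin.ext (by rw [h, hzdef]))
            rw [hgi i hi, bit_lfin_eq_one n hn hl i hiv, hMe]
        rw [hTl, Finset.prod_boole]
        simp only [Finset.mem_univ, true_implies, all_bits_zero_iff n x]
      have H : Fin n → Fin 2 → ℂ := fun i b =>
        g i (bit n i x) b * (if i = z then (if b = 1 then (1:ℂ) else 0) else 1)
      have hS2 : (∑ y : Fin (2^n), T y * (if bit n z y = 1 then (1:ℂ) else 0)) =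
          if (x : ℕ) = 2^n - 1 then (1:ℂ) else 0 := by
        have key : ∀ y : Fin (2^n), T y * (if bit n z y = 1 then (1:ℂ) else 0) =
            ∏ i, (g i (bit n i x) (bit n i y) *
              (if i = z then (if bit n i y = 1 then (1:ℂ) else 0) else 1)) := by
          intro y
          rw [Finset.prod_mul_distrib]
          congr 1
          rw [Finset.prod_ite_eq' Finset.univ z
            (fun i => if bit n i y = 1 then (1:ℂ) else 0), if_pos (Finset.mem_univ _)]
        rw [Finset.sum_congr rfl (fun y _ => key y)]
        rw [sum_prod_bit n (fun i b => g i (bit n i x) b *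
          (if i = z then (if b = 1 then (1:ℂ) else 0) else 1))]
        have hfac : ∀ i : Fin n,
            (g i (bit n i x) 0 * (if i = z then (if (0:Fin 2) = 1 then (1:ℂ) else 0) else 1) +
             g i (bit n i x) 1 * (if i = z then (if (1:Fin 2) = 1 then (1:ℂ) else 0) else 1)) =
            if bit n i x = 1 then (1:ℂ) else 0 := by
          intro i
          by_cases hi : i = z
          · rw [hi, hgz]
            norm_num [Matrix.one_apply]
          · rw [hgi i hi]
            simp only [if_neg hi, mul_one]
            exact hMsum (bit n i x)
        rw [Finset.prod_congr rfl (fun i _ => hfac i), Finset.prod_boole]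
        simp only [Finset.mem_univ, true_implies, all_bits_one_iff n x]
      rw [hsplit, hS1, hS2]
      unfold GHZ
      have hs2 : ((Real.sqrt 2 : ℝ) : ℂ) ≠ 0 := by
        simp only [ne_eq, Complex.ofReal_eq_zero]; positivity
      have hsA' : ((Real.sqrt ((2:ℝ)^(n-1) + 1) : ℝ) : ℂ) ≠ 0 := by exact_mod_cast hsA
      have hne : ¬ ((x:ℕ) = 0 ∧ (x:ℕ) = 2^n - 1) := by
        rintro ⟨ha, hb⟩; omega
      by_cases hx0 : (x : ℕ) = 0
      · rw [if_pos (Or.inl hx0), if_pos hx0, if_neg (fun h => hne ⟨hx0, h⟩)]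
        push_cast
        field_simp
        simp
      · by_cases hxt : (x : ℕ) = 2^n - 1
        · rw [if_pos (Or.inr hxt), if_neg hx0, if_pos hxt]
          push_cast
          field_simp
          simp
        · rw [if_neg (by tauto), if_neg hx0, if_neg hxt]
          ring
end
end

section
/- Let n ≥ 3 and N = 2^n. Then there are at least ⌊(N−2)/3⌋ + 3 pairs (l, r) with 0 ≤ l < N and 1 ≤ r < N such that the periodic state Ψ^n_{l,r} is SLOCC-equivalent to GHZ_n; namely the pair (1,1), the pair (N/2−1, 1), and the ⌊(N−2)/3⌋ + 1 pairs (k, N−1−2k) for 0 ≤ k ≤ ⌊(N−2)/3⌋ on the anti-diagonal 2l + r = N − 1 are pairwise distinct and each gives a state SLOCC-equivalent to GHZ_n. -/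
open scoped BigOperators

noncomputable section

-- bit as the rev-indexed digit
lemma bit_eq (n : ℕ) (i : Fin n) (x : Fin (2^n)) :
    bit n i x = finFunctionFinEquiv.symm x i.rev := by
  apply Fin.ext
  simp [bit, finFunctionFinEquiv_symm_apply_val, Fin.val_rev, Nat.sub_sub, Nat.add_comm]

lemma sum_prod_bits (n : ℕ) (f : Fin n → Fin 2 → ℂ) :
    ∑ y : Fin (2^n), ∏ i, f i (bit n i y) = ∏ i, (f i 0 + f i 1) := by
  rw [← Equiv.sum_comp (finFunctionFinEquiv (m := 2) (n := n))]
  have h1 : ∀ v : Fin n → Fin 2, ∏ i, f i (bit n i (finFunctionFinEquiv v)) =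
      ∏ i, f i.rev (v i) := by
    intro v
    rw [← Equiv.prod_comp (Fin.revPerm (n := n)) (fun i => f i.rev (v i))]
    refine Finset.prod_congr rfl fun i _ => ?_
    rw [bit_eq]
    simp
  simp_rw [h1]
  rw [(Fintype.prod_sum (κ := fun _ : Fin n => Fin 2) (fun i b => f i.rev b)).symm]
  refine Fintype.prod_equiv Fin.revPerm _ _ fun i => ?_
  simp [Fin.sum_univ_two]

lemma bits_inj {n : ℕ} {x a : Fin (2^n)} (h : ∀ i, bit n i x = bit n i a) : x = a := by
  have h2 : finFunctionFinEquiv.symm x = finFunctionFinEquiv.symm a := by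
    funext j
    have := h j.rev
    rwa [bit_eq, bit_eq, Fin.rev_rev] at this
  exact finFunctionFinEquiv.symm.injective h2

lemma prod_delta {n : ℕ} (x a : Fin (2^n)) :
    ∏ i, (if bit n i x = bit n i a then (1:ℂ) else 0) = if x = a then 1 else 0 := by
  rw [Fintype.prod_boole]
  congr 1
  simp only [eq_iff_iff]
  exact ⟨fun h => bits_inj h, fun h i => by rw [h]⟩

lemma transform {n : ℕ} (g : Fin n → Matrix (Fin 2) (Fin 2) ℂ) (v : Fin n → Fin 2 → ℂ)
    (x : Fin (2^n)) :
    ∑ y : Fin (2^n), (∏ i, g i (bit n i x) (bit n i y)) * ∏ i, v i (bit n i y)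
      = ∏ i, (g i (bit n i x) 0 * v i 0 + g i (bit n i x) 1 * v i 1) := by
  have h : ∀ y : Fin (2^n), (∏ i, g i (bit n i x) (bit n i y)) * ∏ i, v i (bit n i y)
      = ∏ i, (fun i b => g i (bit n i x) b * v i b) i (bit n i y) := by
    intro y; rw [← Finset.prod_mul_distrib]
  simp_rw [h]
  exact sum_prod_bits n (fun i b => g i (bit n i x) b * v i b)

lemma key {n : ℕ} (g : Fin n → Matrix (Fin 2) (Fin 2) ℂ) (v w : Fin n → Fin 2 → ℂ)
    (c1 c2 : ℂ) (ψ : Fin (2^n) → ℂ)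
    (hψ : ∀ y, ψ y = c1 * ∏ i, v i (bit n i y) + c2 * ∏ i, w i (bit n i y)) (x : Fin (2^n)) :
    ∑ y : Fin (2^n), (∏ i, g i (bit n i x) (bit n i y)) * ψ y
      = c1 * ∏ i, (g i (bit n i x) 0 * v i 0 + g i (bit n i x) 1 * v i 1)
      + c2 * ∏ i, (g i (bit n i x) 0 * w i 0 + g i (bit n i x) 1 * w i 1) := by
  simp_rw [hψ, mul_add, Finset.sum_add_distrib]
  rw [← transform g v x, ← transform g w x, Finset.mul_sum, Finset.mul_sum]
  congr 1 <;> exact Finset.sum_congr rfl fun y _ => by ring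

-- Nat facts
lemma nat_pow_sub_one_div (a j : ℕ) (h : j < a) : (2^a - 1) / 2^j % 2 = 1 := by
  obtain ⟨b, hb⟩ : ∃ b, a - j = b + 1 := ⟨a - j - 1, by omega⟩
  have ha : 2^a = 2^j * (2^b * 2) := by
    rw [show a = j + (b+1) by omega, pow_add, pow_succ]
  have hP : 0 < 2^j := Nat.pow_pos (by norm_num)
  have hQ : 0 < 2^b := Nat.pow_pos (by norm_num)
  have e1 : 2^j * (2 * 2^b - 1) = 2^j * (2 * 2^b) - 2^j := by
    rw [Nat.mul_sub]; simp
  have e2 : 2^j ≤ 2^j * (2 * 2^b) := Nat.le_mul_of_pos_right _ (by omega)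
  have e3 : 2^a - 1 = 2^j * (2 * 2^b - 1) + (2^j - 1) := by
    rw [ha]; rw [e1]; rw [Nat.mul_comm (2^b) 2]; omega
  rw [e3, Nat.mul_add_div hP, Nat.div_eq_of_lt (by omega)]
  omega

lemma sum_fin_pow_two (n : ℕ) : ∑ i : Fin n, 2^(i:ℕ) = 2^n - 1 := by
  induction n with
  | zero => simp
  | succ m ih =>
    rw [Fin.sum_univ_castSucc]
    simp only [Fin.coe_castSucc, Fin.val_last, ih, pow_succ]
    have : 0 < 2^m := Nat.pow_pos (by norm_num)
    omega

-- bits of special values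
lemma bit_zero {n : ℕ} (i : Fin n) (x : Fin (2^n)) (hx : (x:ℕ) = 0) : bit n i x = 0 := by
  apply Fin.ext; simp [bit, hx]

lemma bit_top {n : ℕ} (i : Fin n) (x : Fin (2^n)) (hx : (x:ℕ) = 2^n - 1) : bit n i x = 1 := by
  apply Fin.ext
  have := i.isLt
  simp only [bit, hx]
  exact nat_pow_sub_one_div n (n - 1 - i) (by omega)

lemma bit_compl {n : ℕ} (x y : Fin (2^n)) (h : (x:ℕ) + (y:ℕ) = 2^n - 1) (i : Fin n) :
    bit n i y = bit n i x + 1 := by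
  set v := finFunctionFinEquiv.symm x with hv
  have hy : y = finFunctionFinEquiv (fun j => v j + 1) := by
    apply Fin.ext
    rw [finFunctionFinEquiv_apply]
    have hadd : ∀ j : Fin n, ((v j + 1 : Fin 2) : ℕ) = 1 - (v j : ℕ) := by
      intro j
      have h1 := (v j).isLt
      have h2 : ((v j + 1 : Fin 2) : ℕ) = ((v j : ℕ) + 1) % 2 := by
        simp [Fin.add_def]
      omega
    have hx' : (x:ℕ) = ∑ j : Fin n, (v j : ℕ) * 2^(j:ℕ) := by
      rw [hv, ← finFunctionFinEquiv_apply, Equiv.apply_symm_apply]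
    have hsum : (∑ j : Fin n, ((v j + 1 : Fin 2) : ℕ) * 2^(j:ℕ)) + (x:ℕ) = 2^n - 1 := by
      rw [hx', ← Finset.sum_add_distrib]
      have : ∀ j : Fin n, ((v j + 1 : Fin 2) : ℕ) * 2^(j:ℕ) + (v j : ℕ) * 2^(j:ℕ) = 2^(j:ℕ) := by
        intro j
        rw [hadd j, ← Nat.add_mul]
        have := (v j).isLt
        have : 1 - (v j : ℕ) + (v j : ℕ) = 1 := by omega
        rw [this, one_mul]
      rw [Finset.sum_congr rfl fun j _ => this j, sum_fin_pow_two]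
    omega
  rw [hy, bit_eq, Equiv.symm_apply_apply, bit_eq, hv]

lemma bit_msb {n : ℕ} (hn : 0 < n) (x : Fin (2^n)) :
    bit n ⟨0, hn⟩ x = 1 ↔ 2^(n-1) ≤ (x:ℕ) := by
  have hx := x.isLt
  have h2 : 2^n = 2^(n-1) * 2 := by
    rw [← pow_succ]; congr 1; omega
  have hd : (x:ℕ) / 2^(n-1) < 2 := Nat.div_lt_of_lt_mul (by omega)
  have hpos : 0 < 2^(n-1) := Nat.pow_pos (by norm_num)
  rw [show bit n ⟨0, hn⟩ x = ⟨(x:ℕ) / 2^(n-1) % 2, Nat.mod_lt _ (by norm_num)⟩ from rfl]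
  rw [Fin.ext_iff]
  simp only [Fin.val_one]
  rw [Nat.mod_eq_of_lt hd]
  have h3 : 1 ≤ (x:ℕ) / 2^(n-1) ↔ 2^(n-1) ≤ (x:ℕ) := Nat.one_le_div_iff hpos
  omega

lemma fin2 (a : Fin 2) : a = 0 ∨ a = 1 := by
  rcases a with ⟨v, hv⟩
  interval_cases v
  · exact Or.inl rfl
  · exact Or.inr rfl

lemma prod_delta_zero {n : ℕ} (x : Fin (2^n)) :
    ∏ i, (if bit n i x = 0 then (1:ℂ) else 0) = if (x:ℕ) = 0 then 1 else 0 := by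
  have hpos : 0 < 2^n := Nat.pow_pos (by norm_num)
  have h : ∀ i : Fin n, bit n i (⟨0, hpos⟩ : Fin (2^n)) = 0 := fun i => bit_zero i _ rfl
  calc ∏ i, (if bit n i x = 0 then (1:ℂ) else 0)
      = ∏ i, (if bit n i x = bit n i ⟨0, hpos⟩ then (1:ℂ) else 0) := by
        refine Finset.prod_congr rfl fun i _ => by rw [h i]
    _ = if x = ⟨0, hpos⟩ then 1 else 0 := prod_delta x _
    _ = if (x:ℕ) = 0 then 1 else 0 := by simp only [Fin.ext_iff, Fin.val_mk]

lemma prod_delta_one {n : ℕ} (x : Fin (2^n)) :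
    ∏ i, (if bit n i x = 1 then (1:ℂ) else 0) = if (x:ℕ) = 2^n - 1 then 1 else 0 := by
  have hpos : 0 < 2^n := Nat.pow_pos (by norm_num)
  have h : ∀ i : Fin n, bit n i (⟨2^n - 1, by omega⟩ : Fin (2^n)) = 1 :=
    fun i => bit_top i _ rfl
  calc ∏ i, (if bit n i x = 1 then (1:ℂ) else 0)
      = ∏ i, (if bit n i x = bit n i ⟨2^n - 1, by omega⟩ then (1:ℂ) else 0) := by
        refine Finset.prod_congr rfl fun i _ => by rw [h i]
    _ = if x = ⟨2^n - 1, by omega⟩ then 1 else 0 := prod_delta x _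
    _ = if (x:ℕ) = 2^n - 1 then 1 else 0 := by simp only [Fin.ext_iff, Fin.val_mk]

lemma GHZ_split {n : ℕ} (hn : 1 ≤ n) (x : Fin (2^n)) :
    GHZ n x = (1/Real.sqrt 2 : ℝ) * (if (x:ℕ) = 0 then (1:ℂ) else 0)
      + (1/Real.sqrt 2 : ℝ) * (if (x:ℕ) = 2^n - 1 then (1:ℂ) else 0) := by
  have h2 : 2 ≤ 2^n := by
    calc 2 = 2^1 := rfl
    _ ≤ 2^n := Nat.pow_le_pow_right (by norm_num) hn
  unfold GHZ
  by_cases h0 : (x:ℕ) = 0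
  · rw [if_pos (Or.inl h0), if_pos h0, if_neg (by omega)]
    push_cast; ring
  · by_cases h1 : (x:ℕ) = 2^n - 1
    · rw [if_pos (Or.inr h1), if_neg h0, if_pos h1]
      push_cast; ring
    · rw [if_neg (by tauto), if_neg h0, if_neg h1]
      ring

lemma slocc_antidiag (n : ℕ) (hn : 3 ≤ n) (k : ℕ) (hk : 3*k ≤ 2^n - 2) :
    SLOCCEquiv n (periodicState n k (2^n - 1 - 2*k)) (GHZ n) := by
  have hN : 8 ≤ 2^n := by
    calc (8:ℕ) = 2^3 := rfl
    _ ≤ 2^n := Nat.pow_le_pow_right (by norm_num) hn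
  set N := 2^n with hNdef
  set r := N - 1 - 2*k with hr
  have hkr : k < r := by omega
  have hkN : k < N := by omega
  set kk : Fin (2^n) := ⟨k, hkN⟩ with hkk
  set kk' : Fin (2^n) := ⟨N - 1 - k, by omega⟩ with hkk'
  have hsum : (kk:ℕ) + (kk':ℕ) = 2^n - 1 := by simp [hkk, hkk']; omega
  have hA : (2^n - k + r - 1) / r = 2 := by
    rw [show 2^n - k + r - 1 = r * 2 + k by omega]
    rw [Nat.mul_add_div (by omega), Nat.div_eq_of_lt hkr]
  have hψ : ∀ y : Fin (2^n), periodicState n k r y =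
      if (y:ℕ) = k ∨ (y:ℕ) = N - 1 - k then (1:ℂ) / (Real.sqrt 2 : ℝ) else 0 := by
    intro y
    unfold periodicState
    rw [hA]
    have hcond : (∃ i < 2, (y:ℕ) = k + i * r) ↔ ((y:ℕ) = k ∨ (y:ℕ) = N - 1 - k) := by
      constructor
      · rintro ⟨i, hi, hy⟩
        interval_cases i
        · left; omega
        · right; omega
      · rintro (h | h)
        · exact ⟨0, by omega, by omega⟩
        · exact ⟨1, by omega, by omega⟩
    simp only [hcond]
    norm_num
  set c : ℂ := (1:ℂ) / (Real.sqrt 2 : ℝ) with hc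
  set G : Fin n → Matrix (Fin 2) (Fin 2) ℂ :=
    fun i => Matrix.of fun a b => if a = b + bit n i kk then (1:ℂ) else 0 with hG
  set V : Fin n → Fin 2 → ℂ := fun i b => if b = bit n i kk then (1:ℂ) else 0 with hV
  set W : Fin n → Fin 2 → ℂ := fun i b => if b = bit n i kk' then (1:ℂ) else 0 with hW
  have hkkne : kk ≠ kk' := by
    simp only [hkk, hkk', Ne, Fin.ext_iff]
    omega
  have hrw : ∀ y : Fin (2^n), periodicState n k r y =
      c * ∏ i, V i (bit n i y) + c * ∏ i, W i (bit n i y) := by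
    intro y
    rw [hψ y]
    have e1 : ∏ i, V i (bit n i y) = if y = kk then 1 else 0 := prod_delta y kk
    have e2 : ∏ i, W i (bit n i y) = if y = kk' then 1 else 0 := prod_delta y kk'
    rw [e1, e2]
    by_cases h1 : y = kk
    · rw [if_pos (Or.inl (by rw [h1]))]
      rw [if_pos h1, if_neg (h1 ▸ hkkne)]
      ring
    · by_cases h2 : y = kk'
      · rw [if_pos (Or.inr (by rw [h2]))]
        rw [if_neg h1, if_pos h2]
        ring
      · rw [if_neg, if_neg h1, if_neg h2]
        · ring
        · rw [Fin.ext_iff] at h1 h2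
          simp only [hkk, hkk'] at h1 h2
          tauto
  refine ⟨G, 1, one_ne_zero, ?_, ?_⟩
  · intro i
    rw [Matrix.isUnit_iff_isUnit_det]
    rcases fin2 (bit n i kk) with h | h <;>
      simp [hG, Matrix.det_fin_two, h, Matrix.of_apply]
  · intro x
    rw [one_mul, key G V W c c (periodicState n k r) hrw x]
    have hcompl : ∀ i, bit n i kk' = bit n i kk + 1 := bit_compl kk kk' hsum
    have hE0 : ∀ i : Fin n, (G i (bit n i x) 0 * V i 0 + G i (bit n i x) 1 * V i 1)
        = if bit n i x = 0 then (1:ℂ) else 0 := by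
      intro i
      rcases fin2 (bit n i kk) with h | h <;> rcases fin2 (bit n i x) with h' | h' <;>
        simp [hG, hV, h, h', Matrix.of_apply]
    have hE1 : ∀ i : Fin n, (G i (bit n i x) 0 * W i 0 + G i (bit n i x) 1 * W i 1)
        = if bit n i x = 1 then (1:ℂ) else 0 := by
      intro i
      rcases fin2 (bit n i kk) with h | h <;> rcases fin2 (bit n i x) with h' | h' <;>
        simp [hG, hW, hcompl, h, h', Matrix.of_apply]
    rw [Finset.prod_congr rfl fun i _ => hE0 i, Finset.prod_congr rfl fun i _ => hE1 i]
    rw [prod_delta_zero, prod_delta_one, GHZ_split (by omega) x]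
    rw [hc]
    push_cast
    ring

lemma slocc_one_one (n : ℕ) (hn : 3 ≤ n) :
    SLOCCEquiv n (periodicState n 1 1) (GHZ n) := by
  have hN : 8 ≤ 2^n := by
    calc (8:ℕ) = 2^3 := rfl
    _ ≤ 2^n := Nat.pow_le_pow_right (by norm_num) hn
  set N := 2^n with hNdef
  set β : ℂ := Complex.exp (Real.pi * Complex.I / n) with hβ
  have hn0 : (n:ℂ) ≠ 0 := by exact_mod_cast (by omega : n ≠ 0)
  have hβn : β ^ n = -1 := by
    rw [hβ, ← Complex.exp_nat_mul]
    rw [show (n:ℂ) * (Real.pi * Complex.I / n) = Real.pi * Complex.I by field_simp]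
    exact Complex.exp_pi_mul_I
  set s : ℝ := Real.sqrt ((N - 1 : ℕ) : ℝ) with hs
  have hs0 : (0:ℝ) < s := Real.sqrt_pos.2 (by
    have : (7:ℝ) ≤ ((N - 1 : ℕ) : ℝ) := by exact_mod_cast (by omega : (7:ℕ) ≤ N - 1)
    linarith)
  have hsC : (s:ℂ) ≠ 0 := by exact_mod_cast hs0.ne'
  have hψ : ∀ y : Fin (2^n), periodicState n 1 1 y =
      if 1 ≤ (y:ℕ) then (1:ℂ) / (s:ℝ) else 0 := by
    intro y
    unfold periodicState
    have hA : (2^n - 1 + 1 - 1) / 1 = N - 1 := by simp [hNdef]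
    rw [hA]
    have hy := y.isLt
    have hcond : (∃ i < N - 1, (y:ℕ) = 1 + i * 1) ↔ 1 ≤ (y:ℕ) := by
      constructor
      · rintro ⟨i, hi, hy'⟩; omega
      · intro h; exact ⟨(y:ℕ) - 1, by omega, by omega⟩
    simp only [hcond, hs]
  set c : ℂ := (s:ℝ) * ((1:ℂ) / (Real.sqrt 2 : ℝ)) with hc
  set G : Fin n → Matrix (Fin 2) (Fin 2) ℂ := fun _ => !![0, 1; β, -β] with hG
  set U : Fin n → Fin 2 → ℂ := fun _ _ => 1 with hU
  set V : Fin n → Fin 2 → ℂ := fun _ b => if b = 0 then (1:ℂ) else 0 with hV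
  have hrw : ∀ y : Fin (2^n), periodicState n 1 1 y =
      ((1:ℂ)/(s:ℝ)) * ∏ i, U i (bit n i y) + (-((1:ℂ)/(s:ℝ))) * ∏ i, V i (bit n i y) := by
    intro y
    rw [hψ y]
    have e1 : ∏ i, U i (bit n i y) = 1 := by simp [hU]
    have e2 : ∏ i, V i (bit n i y) = if (y:ℕ) = 0 then 1 else 0 := by
      rw [show (∏ i, V i (bit n i y)) = ∏ i, (if bit n i y = 0 then (1:ℂ) else 0) from rfl]
      exact prod_delta_zero y
    rw [e1, e2]
    by_cases h0 : (y:ℕ) = 0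
    · rw [if_neg (by omega), if_pos h0]; ring
    · rw [if_pos (by omega), if_neg h0]; ring
  have hsqrt2 : (Real.sqrt 2 : ℂ) ≠ 0 := by
    exact_mod_cast (Real.sqrt_pos.2 (by norm_num)).ne'
  refine ⟨G, c, ?_, ?_, ?_⟩
  · rw [hc]
    apply mul_ne_zero hsC
    simp [hsqrt2]
  · intro i
    rw [Matrix.isUnit_iff_isUnit_det]
    rw [hG, Matrix.det_fin_two_of]
    simp [hβ, Complex.exp_ne_zero]
  · intro x
    rw [key G U V ((1:ℂ)/(s:ℝ)) (-((1:ℂ)/(s:ℝ))) (periodicState n 1 1) hrw x]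
    have hE0 : ∀ i : Fin n, (G i (bit n i x) 0 * U i 0 + G i (bit n i x) 1 * U i 1)
        = if bit n i x = 0 then (1:ℂ) else 0 := by
      intro i
      rcases fin2 (bit n i x) with h | h <;> simp [hG, hU, h]
    have hE1 : ∀ i : Fin n, (G i (bit n i x) 0 * V i 0 + G i (bit n i x) 1 * V i 1)
        = β * (if bit n i x = 1 then (1:ℂ) else 0) := by
      intro i
      rcases fin2 (bit n i x) with h | h <;> simp [hG, hV, h]
    rw [Finset.prod_congr rfl fun i _ => hE0 i, Finset.prod_congr rfl fun i _ => hE1 i]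
    rw [Finset.prod_mul_distrib, Finset.prod_const, Finset.card_univ, Fintype.card_fin]
    rw [prod_delta_zero, prod_delta_one, GHZ_split (by omega) x, hβn, hc]
    push_cast
    field_simp

lemma slocc_half (n : ℕ) (hn : 3 ≤ n) :
    SLOCCEquiv n (periodicState n (2^(n-1) - 1) 1) (GHZ n) := by
  have hnpos : 0 < n := by omega
  have hhalf : 2^n = 2 * 2^(n-1) := by
    rw [← pow_succ']
    congr 1
    omega
  have hN : 8 ≤ 2^n := by
    calc (8:ℕ) = 2^3 := rfl
    _ ≤ 2^n := Nat.pow_le_pow_right (by norm_num) hn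
  have hM : 4 ≤ 2^(n-1) := by omega
  set N := 2^n with hNdef
  set M := 2^(n-1) with hMdef
  set mm : Fin (2^n) := ⟨M - 1, by omega⟩ with hmm
  set z : Fin n := ⟨0, hnpos⟩ with hz
  have hbit_mm : ∀ i : Fin n, bit n i mm = if i = z then 0 else 1 := by
    intro i
    by_cases hi : i = z
    · subst hi
      rw [if_pos rfl]
      apply Fin.ext
      show (M - 1) / 2^(n - 1 - 0) % 2 = 0
      rw [Nat.sub_zero, Nat.div_eq_of_lt (by omega)]
    · rw [if_neg hi]
      apply Fin.ext
      show (M - 1) / 2^(n - 1 - (i:ℕ)) % 2 = 1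
      have hi' : (i:ℕ) ≠ 0 := by
        simpa [hz, Fin.ext_iff] using hi
      have := i.isLt
      exact nat_pow_sub_one_div (n-1) (n - 1 - (i:ℕ)) (by omega)
  set s : ℝ := Real.sqrt ((M + 1 : ℕ) : ℝ) with hs
  have hs0 : (0:ℝ) < s := Real.sqrt_pos.2 (by
    have : (5:ℝ) ≤ ((M + 1 : ℕ) : ℝ) := by exact_mod_cast (by omega : (5:ℕ) ≤ M + 1)
    linarith)
  have hsC : (s:ℂ) ≠ 0 := by exact_mod_cast hs0.ne'
  have hψ : ∀ y : Fin (2^n), periodicState n (M - 1) 1 y =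
      if M - 1 ≤ (y:ℕ) then (1:ℂ) / (s:ℝ) else 0 := by
    intro y
    unfold periodicState
    have hA : (2^n - (M - 1) + 1 - 1) / 1 = M + 1 := by
      simp
      omega
    rw [hA]
    have hy := y.isLt
    have hcond : (∃ i < M + 1, (y:ℕ) = (M - 1) + i * 1) ↔ M - 1 ≤ (y:ℕ) := by
      constructor
      · rintro ⟨i, hi, hy'⟩; omega
      · intro h; exact ⟨(y:ℕ) - (M - 1), by omega, by omega⟩
    simp only [hcond, hs]
  set c : ℂ := (s:ℝ) * ((1:ℂ) / (Real.sqrt 2 : ℝ)) with hc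
  set G : Fin n → Matrix (Fin 2) (Fin 2) ℂ :=
    fun i => if i = z then 1 else !![-1, 1; 1, 0] with hG
  set S : Fin n → Fin 2 → ℂ :=
    fun i b => if i = z then (if b = 1 then (1:ℂ) else 0) else 1 with hS
  set T : Fin n → Fin 2 → ℂ := fun i b => if b = bit n i mm then (1:ℂ) else 0 with hT
  have hprodS : ∀ y : Fin (2^n), ∏ i, S i (bit n i y) = if M ≤ (y:ℕ) then 1 else 0 := by
    intro y
    rw [Fintype.prod_eq_single z (fun i hi => by simp [hS, hi])]
    rw [hS]
    simp only [if_pos rfl]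
    by_cases h : M ≤ (y:ℕ)
    · rw [if_pos ((bit_msb hnpos y).2 h), if_pos h]; simp
    · rw [if_neg (fun hb => h ((bit_msb hnpos y).1 hb)), if_neg h]; simp
  have hprodT : ∀ y : Fin (2^n), ∏ i, T i (bit n i y) = if (y:ℕ) = M - 1 then 1 else 0 := by
    intro y
    rw [show (∏ i, T i (bit n i y)) = ∏ i, (if bit n i y = bit n i mm then (1:ℂ) else 0) from rfl]
    rw [prod_delta y mm]
    simp [Fin.ext_iff, hmm]
  have hrw : ∀ y : Fin (2^n), periodicState n (M - 1) 1 y =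
      ((1:ℂ)/(s:ℝ)) * ∏ i, S i (bit n i y) + ((1:ℂ)/(s:ℝ)) * ∏ i, T i (bit n i y) := by
    intro y
    rw [hψ y, hprodS y, hprodT y]
    have hy := y.isLt
    by_cases h1 : M ≤ (y:ℕ)
    · rw [if_pos (by omega), if_pos h1, if_neg (by omega)]; ring
    · by_cases h2 : (y:ℕ) = M - 1
      · rw [if_pos (by omega), if_neg (by omega), if_pos h2]; ring
      · rw [if_neg (by omega), if_neg h1, if_neg h2]; ring
  have hsqrt2 : (Real.sqrt 2 : ℂ) ≠ 0 := by
    exact_mod_cast (Real.sqrt_pos.2 (by norm_num)).ne'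
  refine ⟨G, c, ?_, ?_, ?_⟩
  · rw [hc]
    apply mul_ne_zero hsC
    simp [hsqrt2]
  · intro i
    rw [Matrix.isUnit_iff_isUnit_det, hG]
    by_cases hi : i = z <;> simp [hi, Matrix.det_fin_two_of]
  · intro x
    rw [key G S T ((1:ℂ)/(s:ℝ)) ((1:ℂ)/(s:ℝ)) (periodicState n (M-1) 1) hrw x]
    have hE0 : ∀ i : Fin n, (G i (bit n i x) 0 * S i 0 + G i (bit n i x) 1 * S i 1)
        = if bit n i x = 1 then (1:ℂ) else 0 := by
      intro i
      by_cases hi : i = z <;>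
        rcases fin2 (bit n i x) with h | h <;>
          simp [hG, hS, hi, h, Matrix.one_apply]
    have hE1 : ∀ i : Fin n, (G i (bit n i x) 0 * T i 0 + G i (bit n i x) 1 * T i 1)
        = if bit n i x = 0 then (1:ℂ) else 0 := by
      intro i
      by_cases hi : i = z <;>
        rcases fin2 (bit n i x) with h | h <;>
          simp [hG, hT, hbit_mm, hi, h, Matrix.one_apply]
    rw [Finset.prod_congr rfl fun i _ => hE0 i, Finset.prod_congr rfl fun i _ => hE1 i]
    rw [prod_delta_zero, prod_delta_one, GHZ_split (by omega) x, hc]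
    push_cast
    field_simp
    split_ifs <;> ring

/-- there are at least `⌊(N−2)/3⌋ + 3` pairs `(l,r)` giving periodic
states SLOCC-equivalent to `GHZ_n`: `(1,1)`, `(N/2−1,1)` and the anti-diagonal
pairs `(k, N−1−2k)` for `0 ≤ k ≤ ⌊(N−2)/3⌋`. -/
theorem stmt_11 (n : ℕ) (hn : 3 ≤ n) :
    (2^n - 2) / 3 + 3 ≤
      ((({(1, 1), (2^(n-1) - 1, 1)} : Finset (ℕ × ℕ)) ∪
        (Finset.range ((2^n - 2) / 3 + 1)).image (fun k => (k, 2^n - 1 - 2*k)))).card ∧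
    ∀ p ∈ (({(1, 1), (2^(n-1) - 1, 1)} : Finset (ℕ × ℕ)) ∪
        (Finset.range ((2^n - 2) / 3 + 1)).image (fun k => (k, 2^n - 1 - 2*k))),
      p.1 < 2^n ∧ 1 ≤ p.2 ∧ p.2 < 2^n ∧
        SLOCCEquiv n (periodicState n p.1 p.2) (GHZ n) := by
  have hN : 8 ≤ 2^n := by
    calc (8:ℕ) = 2^3 := rfl
    _ ≤ 2^n := Nat.pow_le_pow_right (by norm_num) hn
  have hhalf : 2^n = 2 * 2^(n-1) := by
    rw [← pow_succ']
    congr 1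
    omega
  have hM : 4 ≤ 2^(n-1) := by omega
  set q := (2^n - 2) / 3 with hq
  have hq3 : 3 * q ≤ 2^n - 2 := by
    rw [hq, Nat.mul_comm]
    exact Nat.div_mul_le_self _ _
  have hrange : ∀ k ∈ Finset.range (q + 1), 3 * k ≤ 2^n - 2 := by
    intro k hk
    rw [Finset.mem_range] at hk
    omega
  constructor
  · rw [Finset.card_union_of_disjoint]
    · rw [Finset.card_image_of_injective _ (fun a b h => (Prod.mk.injEq _ _ _ _ ▸ h : _ ∧ _).1)]
      rw [Finset.card_range]
      rw [Finset.card_insert_of_notMem (by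
        simp only [Finset.mem_singleton, Prod.mk.injEq]
        intro ⟨h1, _⟩
        omega)]
      simp only [Finset.card_singleton]
      omega
    · rw [Finset.disjoint_left]
      intro p hp hp'
      rw [Finset.mem_image] at hp'
      obtain ⟨k, hk, hpk⟩ := hp'
      have h3k := hrange k hk
      simp only [Finset.mem_insert, Finset.mem_singleton] at hp
      rcases hp with h | h <;> rw [← hpk] at h <;>
        simp only [Prod.mk.injEq] at h <;> omega
  · intro p hp
    rw [Finset.mem_union, Finset.mem_insert, Finset.mem_singleton, Finset.mem_image] at hp
    rcases hp with (h | h) | ⟨k, hk, hpk⟩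
    · subst h
      exact ⟨by omega, le_refl 1, by omega, slocc_one_one n hn⟩
    · subst h
      exact ⟨by simp; omega, le_refl 1, by omega, slocc_half n hn⟩
    · have h3k := hrange k hk
      subst hpk
      refine ⟨by simp; omega, by simp; omega, by simp; omega, ?_⟩
      exact slocc_antidiag n hn k h3k
end
end
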